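/- Let κ,ε>0, λ≥0, and let ρ : [0,1] → ℝ be a differentiable function whose derivative ρ_x is continuous and nowhere zero on [0,1]. Let v,w : [0,1] → ℝ be functions such that v/ρ_x and w/ρ_x are four times continuously differentiable, with v(0)=v(1)=w(0)=w(1)=0 and (v/ρ_x)''(0)=(v/ρ_x)''(1)=(w/ρ_x)''(0)=(w/ρ_x)''(1)=0. Then ∫₀¹ (Bv)(x) w(x) dx = ∫₀¹ v(x) (Bw)(x) dx, i.e., the operator B is symmetric with respect to the L²(0,1) inner product. -/

import Mathlib

open MeasureTheory Set intervalIntegral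

/-- Basic integration by parts on `[0,1]` for globally differentiable functions. -/
lemma ibp_basic (u g : ℝ → ℝ) (hu : Differentiable ℝ u) (hu' : Continuous (deriv u))
    (hg : Differentiable ℝ g) (hg' : Continuous (deriv g)) :
    ∫ x in (0:ℝ)..1, deriv u x * g x
      = u 1 * g 1 - u 0 * g 0 - ∫ x in (0:ℝ)..1, u x * deriv g x := by
  have h := intervalIntegral.integral_deriv_mul_eq_sub (a := (0:ℝ)) (b := 1)
      (u := u) (v := g) (u' := deriv u) (v' := deriv g)
      (fun x _ => (hu x).hasDerivAt) (fun x _ => (hg x).hasDerivAt)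
      (hu'.intervalIntegrable 0 1) (hg'.intervalIntegrable 0 1)
  rw [intervalIntegral.integral_add ((show Continuous fun x => deriv u x * g x from hu'.mul hg.continuous).intervalIntegrable 0 1)
      ((show Continuous fun x => u x * deriv g x from hu.continuous.mul hg').intervalIntegrable 0 1)] at h
  linarith

lemma ibp_two (f g : ℝ → ℝ) (hf : ContDiff ℝ 2 f) (hg : ContDiff ℝ 2 g)
    (hg0 : g 0 = 0) (hg1 : g 1 = 0) :
    ∫ x in (0:ℝ)..1, iteratedDeriv 2 f x * g x
      = - ∫ x in (0:ℝ)..1, deriv f x * deriv g x := by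
  have e2 : iteratedDeriv 2 f = deriv (deriv f) := by
    rw [iteratedDeriv_succ, iteratedDeriv_one]
  have h1 : Differentiable ℝ (deriv f) := by
    have := hf.differentiable_iteratedDeriv 1 (by norm_num)
    rwa [iteratedDeriv_one] at this
  have h2 : Continuous (deriv (deriv f)) := by
    have := hf.continuous_iteratedDeriv 2 le_rfl
    rwa [e2] at this
  have key := ibp_basic (deriv f) g h1 h2 (hg.differentiable (by norm_num))
      (hg.continuous_deriv (by norm_num))
  simp only [e2]
  rw [key, hg0, hg1]; ring

lemma ibp_four (f g : ℝ → ℝ) (hf : ContDiff ℝ 4 f) (hg : ContDiff ℝ 2 g)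
    (hg0 : g 0 = 0) (hg1 : g 1 = 0)
    (hf0 : iteratedDeriv 2 f 0 = 0) (hf1 : iteratedDeriv 2 f 1 = 0) :
    ∫ x in (0:ℝ)..1, iteratedDeriv 4 f x * g x
      = ∫ x in (0:ℝ)..1, iteratedDeriv 2 f x * iteratedDeriv 2 g x := by
  have e4 : iteratedDeriv 4 f = deriv (iteratedDeriv 3 f) := iteratedDeriv_succ
  have e3 : iteratedDeriv 3 f = deriv (iteratedDeriv 2 f) := iteratedDeriv_succ
  have eg2 : iteratedDeriv 2 g = deriv (deriv g) := by
    rw [iteratedDeriv_succ, iteratedDeriv_one]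
  have hd3 : Differentiable ℝ (iteratedDeriv 3 f) :=
    hf.differentiable_iteratedDeriv 3 (by norm_num)
  have hc4 : Continuous (deriv (iteratedDeriv 3 f)) := by
    have := hf.continuous_iteratedDeriv 4 le_rfl
    rwa [e4] at this
  have hgd : Differentiable ℝ g := hg.differentiable (by norm_num)
  have hg' : Continuous (deriv g) := hg.continuous_deriv (by norm_num)
  have step1 := ibp_basic (iteratedDeriv 3 f) g hd3 hc4 hgd hg'
  have hd2 : Differentiable ℝ (iteratedDeriv 2 f) :=
    hf.differentiable_iteratedDeriv 2 (by norm_num)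
  have hc3 : Continuous (deriv (iteratedDeriv 2 f)) := by
    have := hf.continuous_iteratedDeriv 3 (by norm_num)
    rwa [e3] at this
  have hgd' : Differentiable ℝ (deriv g) := by
    have := hg.differentiable_iteratedDeriv 1 (by norm_num)
    rwa [iteratedDeriv_one] at this
  have hg'' : Continuous (deriv (deriv g)) := by
    have := hg.continuous_iteratedDeriv 2 le_rfl
    rwa [eg2] at this
  have step2 := ibp_basic (iteratedDeriv 2 f) (deriv g) hd2 hc3 hgd' hg''
  rw [← e3] at step2
  simp only [e4]
  rw [step1, hg0, hg1, step2, hf0, hf1]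
  simp only [← eg2]
  ring

/-- The operator `B` associated with the HV Hessian:
`Bv = (1/ρ_x)[ε (v/ρ_x)'''' − λ (v/ρ_x)'' + (v/ρ_x)(κ + ρ_x²)]`,
where `ρx` denotes the derivative `ρ_x`. -/
noncomputable def Bop (κ lam ε : ℝ) (ρx : ℝ → ℝ) (v : ℝ → ℝ) (x : ℝ) : ℝ :=
  (1 / ρx x) * (ε * iteratedDeriv 4 (fun y => v y / ρx y) x
    - lam * iteratedDeriv 2 (fun y => v y / ρx y) x
    + (v x / ρx x) * (κ + (ρx x) ^ 2))


/-- The operator `B` is symmetric with respect to the `L²(0,1)`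
inner product: `∫₀¹ (Bv) w = ∫₀¹ v (Bw)` for `v, w` satisfying the boundary
conditions `v = w = 0` and `(v/ρ_x)'' = (w/ρ_x)'' = 0` at `x ∈ {0,1}`. -/
theorem Bop_symmetric
    (κ lam ε : ℝ) (hκ : 0 < κ) (hε : 0 < ε) (hlam : 0 ≤ lam)
    (ρ : ℝ → ℝ) (hρ : Differentiable ℝ ρ) (hρx : Continuous (deriv ρ))
    (hρxne : ∀ x ∈ Icc (0:ℝ) 1, deriv ρ x ≠ 0)
    (v w : ℝ → ℝ)
    (hv : ContDiff ℝ 4 (fun x => v x / deriv ρ x))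
    (hw : ContDiff ℝ 4 (fun x => w x / deriv ρ x))
    (hv0 : v 0 = 0) (hv1 : v 1 = 0) (hw0 : w 0 = 0) (hw1 : w 1 = 0)
    (hv''0 : iteratedDeriv 2 (fun x => v x / deriv ρ x) 0 = 0)
    (hv''1 : iteratedDeriv 2 (fun x => v x / deriv ρ x) 1 = 0)
    (hw''0 : iteratedDeriv 2 (fun x => w x / deriv ρ x) 0 = 0)
    (hw''1 : iteratedDeriv 2 (fun x => w x / deriv ρ x) 1 = 0) :
    ∫ x in (0:ℝ)..1, Bop κ lam ε (deriv ρ) v x * w x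
      = ∫ x in (0:ℝ)..1, v x * Bop κ lam ε (deriv ρ) w x := by
  set F : ℝ → ℝ := fun x => v x / deriv ρ x with hF
  set G : ℝ → ℝ := fun x => w x / deriv ρ x with hG
  -- boundary values of F and G
  have hF0 : F 0 = 0 := by simp [hF, hv0]
  have hF1 : F 1 = 0 := by simp [hF, hv1]
  have hG0 : G 0 = 0 := by simp [hG, hw0]
  have hG1 : G 1 = 0 := by simp [hG, hw1]
  -- continuity facts
  have hFc : Continuous F := hv.continuous
  have hGc : Continuous G := hw.continuous
  have hF4 : Continuous (iteratedDeriv 4 F) := hv.continuous_iteratedDeriv 4 le_rfl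
  have hF2 : Continuous (iteratedDeriv 2 F) := hv.continuous_iteratedDeriv 2 (by norm_num)
  have hG4 : Continuous (iteratedDeriv 4 G) := hw.continuous_iteratedDeriv 4 le_rfl
  have hG2 : Continuous (iteratedDeriv 2 G) := hw.continuous_iteratedDeriv 2 (by norm_num)
  have hcc : Continuous (fun x => κ + (deriv ρ x) ^ 2) := by fun_prop
  -- pointwise rewriting of the two integrands
  have hL : ∫ x in (0:ℝ)..1, Bop κ lam ε (deriv ρ) v x * w x
      = ε * (∫ x in (0:ℝ)..1, iteratedDeriv 4 F x * G x)
        - lam * (∫ x in (0:ℝ)..1, iteratedDeriv 2 F x * G x)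
        + ∫ x in (0:ℝ)..1, F x * G x * (κ + (deriv ρ x) ^ 2) := by
    rw [← intervalIntegral.integral_const_mul, ← intervalIntegral.integral_const_mul,
      ← intervalIntegral.integral_sub
        ((show Continuous fun x => ε * (iteratedDeriv 4 F x * G x) from continuous_const.mul (hF4.mul hGc)).intervalIntegrable 0 1)
        ((show Continuous fun x => lam * (iteratedDeriv 2 F x * G x) from continuous_const.mul (hF2.mul hGc)).intervalIntegrable 0 1),
      ← intervalIntegral.integral_add
        ((show Continuous fun x => ε * (iteratedDeriv 4 F x * G x) - lam * (iteratedDeriv 2 F x * G x) from (continuous_const.mul (hF4.mul hGc)).sub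
          (continuous_const.mul (hF2.mul hGc))).intervalIntegrable 0 1)
        ((show Continuous fun x => F x * G x * (κ + (deriv ρ x) ^ 2) from (hFc.mul hGc).mul hcc).intervalIntegrable 0 1)]
    apply intervalIntegral.integral_congr
    intro x _
    simp only [Bop, hF, hG]
    ring
  have hR : ∫ x in (0:ℝ)..1, v x * Bop κ lam ε (deriv ρ) w x
      = ε * (∫ x in (0:ℝ)..1, iteratedDeriv 4 G x * F x)
        - lam * (∫ x in (0:ℝ)..1, iteratedDeriv 2 G x * F x)
        + ∫ x in (0:ℝ)..1, F x * G x * (κ + (deriv ρ x) ^ 2) := by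
    rw [← intervalIntegral.integral_const_mul, ← intervalIntegral.integral_const_mul,
      ← intervalIntegral.integral_sub
        ((show Continuous fun x => ε * (iteratedDeriv 4 G x * F x) from continuous_const.mul (hG4.mul hFc)).intervalIntegrable 0 1)
        ((show Continuous fun x => lam * (iteratedDeriv 2 G x * F x) from continuous_const.mul (hG2.mul hFc)).intervalIntegrable 0 1),
      ← intervalIntegral.integral_add
        ((show Continuous fun x => ε * (iteratedDeriv 4 G x * F x) - lam * (iteratedDeriv 2 G x * F x) from (continuous_const.mul (hG4.mul hFc)).sub
          (continuous_const.mul (hG2.mul hFc))).intervalIntegrable 0 1)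
        ((show Continuous fun x => F x * G x * (κ + (deriv ρ x) ^ 2) from (hFc.mul hGc).mul hcc).intervalIntegrable 0 1)]
    apply intervalIntegral.integral_congr
    intro x _
    simp only [Bop, hF, hG]
    ring
  -- the two key integral identities
  have key4 : ∫ x in (0:ℝ)..1, iteratedDeriv 4 F x * G x
      = ∫ x in (0:ℝ)..1, iteratedDeriv 4 G x * F x := by
    rw [ibp_four F G hv (hw.of_le (by norm_num)) hG0 hG1 hv''0 hv''1,
      ibp_four G F hw (hv.of_le (by norm_num)) hF0 hF1 hw''0 hw''1]
    exact intervalIntegral.integral_congr fun x _ => mul_comm _ _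
  have key2 : ∫ x in (0:ℝ)..1, iteratedDeriv 2 F x * G x
      = ∫ x in (0:ℝ)..1, iteratedDeriv 2 G x * F x := by
    rw [ibp_two F G (hv.of_le (by norm_num)) (hw.of_le (by norm_num)) hG0 hG1,
      ibp_two G F (hw.of_le (by norm_num)) (hv.of_le (by norm_num)) hF0 hF1]
    congr 1
    exact intervalIntegral.integral_congr fun x _ => mul_comm _ _
  rw [hL, hR, key4, key2]
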